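/- Let [a,b] ⊂ ℝ with a < b, and set r = (b−a)/2 and w = w(z) = z − (a+b)/2. There exists a constant C > 0, depending only on a and b, such that for every x ∈ [a,b], every 0 < s ≤ 1, every z ∈ ℂ with |z − x| ≤ s, and every ζ ∈ ℂ satisfying ζ + ζ^{−1} = 2w/r (equivalently, ζ = w/r ± √((w/r)² − 1)), one has |ζ| ≤ 1 + C√s. -/

import Mathlib

private lemma joukowski_aux (r t σ : ℝ) (hr : 0 < r) (ht : 1 ≤ t) (hσ : 0 < σ)
    (hσ1 : σ ≤ 1) (h : (t - 1) ^ 2 * r ≤ 2 * t * σ ^ 2) :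
    t ≤ 1 + (2 / Real.sqrt r + 4 / r + 1) * σ := by
  set ρ := Real.sqrt r with hρ_def
  have hρ : 0 < ρ := Real.sqrt_pos.mpr hr
  have hρsq : ρ ^ 2 = r := Real.sq_sqrt hr.le
  have hp1 : 0 ≤ 4 / r * σ := by positivity
  have hp2 : 0 ≤ 2 / ρ * σ := by positivity
  rcases le_or_gt t 2 with ht2 | ht2
  · have h4 : (t - 1) ^ 2 * ρ ^ 2 ≤ 4 * σ ^ 2 := by nlinarith
    have h5 : ρ * (t - 1) ≤ 2 * σ := by
      nlinarith [sq_nonneg (ρ * (t - 1) - 2 * σ), mul_pos hσ hσ,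
        mul_nonneg (mul_nonneg hρ.le (by linarith : (0:ℝ) ≤ t - 1)) hσ.le]
    have h6 : t - 1 ≤ 2 / ρ * σ := by
      rw [div_mul_eq_mul_div, le_div_iff₀ hρ]
      nlinarith
    linarith
  · have h4 : (t - 1) * r ≤ 4 * σ ^ 2 := by
      nlinarith [mul_pos hσ hσ]
    have h5 : σ ^ 2 ≤ σ := by nlinarith
    have h6 : t - 1 ≤ 4 / r * σ := by
      rw [div_mul_eq_mul_div, le_div_iff₀ hr]
      nlinarith
    linarith

/-- (cf. Lemma 1.1 of [BLMT1].) With `r = (b-a)/2` and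
`w = z - (a+b)/2`: there is a constant `C = C(a,b) > 0` such that for every `x ∈ [a,b]`,
`0 < s ≤ 1`, `z` with `|z - x| ≤ s`, and every solution `ζ` of the Joukowski equation
`ζ + ζ⁻¹ = 2w/r`, one has `|ζ| ≤ 1 + C√s`. -/
theorem joukowski_bound_near_interval (a b : ℝ) (hab : a < b) :
    ∃ C > (0 : ℝ), ∀ x ∈ Set.Icc a b, ∀ s : ℝ, 0 < s → s ≤ 1 →
      ∀ z : ℂ, ‖z - (x : ℂ)‖ ≤ s →
      ∀ ζ : ℂ,
        ζ + ζ⁻¹ = 2 * (z - (((a + b) / 2 : ℝ) : ℂ)) / (((b - a) / 2 : ℝ) : ℂ) →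
        ‖ζ‖ ≤ 1 + C * Real.sqrt s := by
  set r : ℝ := (b - a) / 2 with hr_def
  have hr : 0 < r := by simp only [hr_def]; linarith
  have hρ : 0 < Real.sqrt r := Real.sqrt_pos.mpr hr
  refine ⟨2 / Real.sqrt r + 4 / r + 1, by positivity, ?_⟩
  intro x hx s hs hs1 z hz ζ heq
  have hσpos : 0 < Real.sqrt s := Real.sqrt_pos.mpr hs
  have hσ1 : Real.sqrt s ≤ 1 := by
    rw [show (1:ℝ) = Real.sqrt 1 by simp]
    exact Real.sqrt_le_sqrt hs1
  have hσsq : Real.sqrt s ^ 2 = s := Real.sq_sqrt hs.le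
  have hCσ : 0 < (2 / Real.sqrt r + 4 / r + 1) * Real.sqrt s := by positivity
  rcases lt_or_ge (‖ζ‖) 1 with ht | ht
  · linarith
  have hζ0 : ζ ≠ 0 := by
    intro h
    rw [h, norm_zero] at ht; linarith
  set c : ℝ := (a + b) / 2 with hc_def
  set y : ℝ := (x - c) / r with hy_def
  have hy1 : |y| ≤ 1 := by
    rw [hy_def, abs_div, abs_of_pos hr, div_le_one hr]
    rcases hx with ⟨h1, h2⟩
    rw [abs_le]
    constructor <;> simp only [hc_def, hr_def] <;> linarith
  have hy2 : 0 ≤ 1 - y ^ 2 := by nlinarith [abs_nonneg y, sq_abs y]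
  set η : ℂ := (y : ℂ) + (Real.sqrt (1 - y ^ 2) : ℝ) * Complex.I with hη_def
  have hηre : η.re = y := by simp [hη_def]
  have hηim : η.im = Real.sqrt (1 - y ^ 2) := by simp [hη_def]
  have hns : Complex.normSq η = 1 := by
    rw [Complex.normSq_apply, hηre, hηim, Real.mul_self_sqrt hy2]; ring
  have hηnorm : ‖η‖ = 1 := by
    rw [Complex.norm_def, hns, Real.sqrt_one]
  have hprod : η * (starRingEnd ℂ) η = 1 := by
    rw [Complex.mul_conj, hns]; norm_num
  have hsum : η + (starRingEnd ℂ) η = 2 * (y : ℂ) := by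
    rw [Complex.add_conj, hηre]; push_cast; ring
  set u : ℂ := (z - (c : ℂ)) / (r : ℂ) with hu_def
  have hrC : (r : ℂ) ≠ 0 := by exact_mod_cast hr.ne'
  have h1 : ζ * ζ + 1 = 2 * u * ζ := by
    have heq' : ζ + ζ⁻¹ = 2 * u := by rw [heq, hu_def]; push_cast; ring
    field_simp at heq'
    linear_combination heq'
  have hkey : 2 * ζ * (u - (y : ℂ)) = (ζ - η) * (ζ - (starRingEnd ℂ) η) := by
    linear_combination -h1 + ζ * hsum - hprod
  have huy : ‖u - (y : ℂ)‖ ≤ s / r := by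
    have he : u - (y : ℂ) = (z - (x : ℂ)) / (r : ℂ) := by
      rw [hu_def, hy_def]; push_cast; field_simp; ring
    rw [he, norm_div, Complex.norm_real, Real.norm_of_nonneg hr.le]
    gcongr
  have hconj : ‖(starRingEnd ℂ) η‖ = 1 := by rw [RCLike.norm_conj, hηnorm]
  have hlow1 : ‖ζ‖ - 1 ≤ ‖ζ - η‖ := by
    calc ‖ζ‖ - 1 = ‖ζ‖ - ‖η‖ := by rw [hηnorm]
    _ ≤ ‖ζ - η‖ := norm_sub_norm_le ζ η
  have hlow2 : ‖ζ‖ - 1 ≤ ‖ζ - (starRingEnd ℂ) η‖ := by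
    calc ‖ζ‖ - 1 = ‖ζ‖ - ‖(starRingEnd ℂ) η‖ := by rw [hconj]
    _ ≤ ‖ζ - (starRingEnd ℂ) η‖ := norm_sub_norm_le _ _
  have hmain : (‖ζ‖ - 1) ^ 2 ≤ 2 * ‖ζ‖ * (s / r) := by
    have h2 : (‖ζ‖ - 1) ^ 2 ≤ ‖(ζ - η) * (ζ - (starRingEnd ℂ) η)‖ := by
      rw [norm_mul, sq]
      exact mul_le_mul hlow1 hlow2 (by linarith) (norm_nonneg _)
    rw [← hkey] at h2
    have h3 : ‖2 * ζ * (u - (y : ℂ))‖ = 2 * ‖ζ‖ * ‖u - (y : ℂ)‖ := by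
      rw [norm_mul, norm_mul]; norm_num
    rw [h3] at h2
    calc (‖ζ‖ - 1) ^ 2 ≤ 2 * ‖ζ‖ * ‖u - (y : ℂ)‖ := h2
      _ ≤ 2 * ‖ζ‖ * (s / r) := by
          apply mul_le_mul_of_nonneg_left huy
          positivity
  have hmain' : (‖ζ‖ - 1) ^ 2 * r ≤ 2 * ‖ζ‖ * Real.sqrt s ^ 2 := by
    have h4 := mul_le_mul_of_nonneg_right hmain hr.le
    have h5 : 2 * ‖ζ‖ * (s / r) * r = 2 * ‖ζ‖ * s := by field_simp
    rw [h5] at h4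
    rw [hσsq]
    exact h4
  exact joukowski_aux r (‖ζ‖) (Real.sqrt s) hr ht hσpos hσ1 hmain'
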